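/- Let r₁, r₂ > 0 and let c₁, c₂ ∈ ℝ² with d = ‖c₁ − c₂‖ satisfying |r₁ − r₂| < d < r₁ + r₂, d² + r₁² > r₂² and d² + r₂² > r₁². Then the Lebesgue area of the intersection of the two closed disks equals volume(closedBall(c₁, r₁) ∩ closedBall(c₂, r₂)) = r₁²·arctan(t/(d² + r₁² − r₂²)) + r₂²·arctan(t/(d² − r₁² + r₂²)) − t/2, where t = √((d + r₁ + r₂)(d + r₁ − r₂)(d − r₁ + r₂)(−d + r₁ + r₂)). -/

import Mathlib

open Metric MeasureTheory Real Set

private lemma seg_integral' (r a : ℝ) (hr : 0 < r) (ha : -r < a) (har : a ≤ r) :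
    ∫ x in a..r, 2 * Real.sqrt (r^2 - x^2)
      = r^2*(π/2) - a * Real.sqrt (r^2-a^2) - r^2 * Real.arcsin (a/r) := by
  have key : ∫ x in a..r, 2 * Real.sqrt (r^2 - x^2)
      = (r * Real.sqrt (r^2-r^2) + r^2 * Real.arcsin (r/r))
        - (a * Real.sqrt (r^2-a^2) + r^2 * Real.arcsin (a/r)) := by
    apply intervalIntegral.integral_eq_sub_of_hasDerivAt_of_le (f := fun y => y * Real.sqrt (r^2 - y^2) + r^2 * Real.arcsin (y/r)) (f' := fun y => 2 * Real.sqrt (r^2 - y^2)) har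
    · apply ContinuousOn.add
      · exact (continuousOn_id.mul ((continuous_const.sub (continuous_pow 2)).continuousOn.sqrt))
      · exact (continuous_const.mul (Real.continuous_arcsin.comp (continuous_id.div_const r))).continuousOn
    · intro x hx
      have hx1 : -r < x := lt_trans ha hx.1
      have hx2 : x < r := hx.2
      have hpos : 0 < r^2 - x^2 := by nlinarith
      have hs : Real.sqrt (r^2 - x^2) ≠ 0 := by positivity
      have hspos : 0 < Real.sqrt (r^2 - x^2) := by positivity
      have h1 : HasDerivAt (fun y : ℝ => r^2 - y^2) (-(2*x)) x := by
        simpa using ((hasDerivAt_pow 2 x).const_sub (r^2))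
      have h2 : HasDerivAt (fun y : ℝ => Real.sqrt (r^2 - y^2))
          (-(2*x) / (2 * Real.sqrt (r^2 - x^2))) x := h1.sqrt (by positivity)
      have h3 : HasDerivAt (fun y : ℝ => y * Real.sqrt (r^2 - y^2))
          (Real.sqrt (r^2-x^2) + x * (-(2*x) / (2 * Real.sqrt (r^2 - x^2)))) x := by
        simpa [Pi.mul_def] using (hasDerivAt_id' x).mul h2
      have hne1 : x / r ≠ -1 := by
        intro h; have : x = -r := by field_simp at h; linarith
        linarith
      have hne2 : x / r ≠ 1 := by
        intro h; field_simp at h; linarith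
      have h4 : HasDerivAt (fun y : ℝ => r^2 * Real.arcsin (y / r))
          (r^2 * ((1 / Real.sqrt (1 - (x/r)^2)) * (1/r))) x := by
        have := (Real.hasDerivAt_arcsin hne1 hne2).comp x ((hasDerivAt_id x).div_const r)
        simpa using this.const_mul (r^2)
      have heq : Real.sqrt (1 - (x/r)^2) = Real.sqrt (r^2 - x^2) / r := by
        have h5 : 1 - (x/r)^2 = (r^2 - x^2) / r^2 := by field_simp
        rw [h5, Real.sqrt_div hpos.le, Real.sqrt_sq hr.le]
      have := h3.add h4
      convert this using 1
      · rfl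
      have hsq : Real.sqrt (r^2 - x^2) ^ 2 = r^2 - x^2 := Real.sq_sqrt hpos.le
      rw [heq]
      field_simp
      linear_combination hsq
    · apply Continuous.intervalIntegrable
      exact continuous_const.mul ((continuous_const.sub (continuous_pow 2)).sqrt)
  rw [key]
  rw [div_self hr.ne', Real.arcsin_one]
  simp
  ring

set_option maxHeartbeats 1000000 in
private lemma planar_lens (r₁ r₂ d t : ℝ) (hr₁ : 0 < r₁) (hr₂ : 0 < r₂)
    (hlow : |r₁ - r₂| < d) (hhigh : d < r₁ + r₂)
    (h₁ : d ^ 2 + r₁ ^ 2 > r₂ ^ 2) (h₂ : d ^ 2 + r₂ ^ 2 > r₁ ^ 2)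
    (ht : t = Real.sqrt ((d + r₁ + r₂) * (d + r₁ - r₂) * (d - r₁ + r₂) * (-d + r₁ + r₂))) :
    volume {p : ℝ × ℝ | p.1 ^ 2 + p.2 ^ 2 ≤ r₁ ^ 2 ∧ (p.1 - d) ^ 2 + p.2 ^ 2 ≤ r₂ ^ 2} =
      ENNReal.ofReal
        (r₁ ^ 2 * Real.arctan (t / (d ^ 2 + r₁ ^ 2 - r₂ ^ 2)) +
          r₂ ^ 2 * Real.arctan (t / (d ^ 2 - r₁ ^ 2 + r₂ ^ 2)) - t / 2) := by
  have hd : 0 < d := lt_of_le_of_lt (abs_nonneg _) hlow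
  set x₀ : ℝ := (d^2 + r₁^2 - r₂^2) / (2*d) with hx₀def
  set x₁ : ℝ := (d^2 - r₁^2 + r₂^2) / (2*d) with hx₁def
  have hx₀pos : 0 < x₀ := div_pos (by linarith) (by linarith)
  have hx₁pos : 0 < x₁ := div_pos (by linarith) (by linarith)
  have hsum : x₀ + x₁ = d := by rw [hx₀def, hx₁def]; field_simp; ring
  have h1 : r₁ - r₂ < d := (abs_lt.mp hlow).2
  have h2 : r₂ - r₁ < d := by have := (abs_lt.mp hlow).1; linarith
  have hx₀lt : x₀ < r₁ := by
    rw [div_lt_iff₀ (by linarith)]; nlinarith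
  have hx₁lt : x₁ < r₂ := by
    rw [div_lt_iff₀ (by linarith)]; nlinarith
  set h : ℝ := Real.sqrt (r₁^2 - x₀^2) with hhdef
  have hh2 : h^2 = r₁^2 - x₀^2 := Real.sq_sqrt (by nlinarith)
  have hhpos : 0 < h := Real.sqrt_pos.mpr (by nlinarith)
  have heq12 : r₂^2 - x₁^2 = r₁^2 - x₀^2 := by
    rw [hx₀def, hx₁def]; field_simp; ring
  have ht2dh : t = 2 * d * h := by
    rw [ht]
    have : (d + r₁ + r₂) * (d + r₁ - r₂) * (d - r₁ + r₂) * (-d + r₁ + r₂)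
        = (2*d*h)^2 := by
      have : (2*d*h)^2 = 4*d^2*(r₁^2 - x₀^2) := by
        have : (2*d*h)^2 = 4*d^2*h^2 := by ring
        rw [this, hh2]
      rw [this, hx₀def]; field_simp; ring
    rw [this, Real.sqrt_sq (by positivity)]
  set g : ℝ → ℝ := fun x => min (r₁^2 - x^2) (r₂^2 - (x - d)^2) with hgdef
  have hgcont : Continuous g :=
    (continuous_const.sub (continuous_pow 2)).min
      (continuous_const.sub ((continuous_id.sub continuous_const).pow 2))
  have hfcont : Continuous (fun x => 2 * Real.sqrt (g x)) :=
    continuous_const.mul (hgcont.sqrt)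
  -- slice computation
  have hAmeas : MeasurableSet {p : ℝ × ℝ | p.1 ^ 2 + p.2 ^ 2 ≤ r₁ ^ 2 ∧ (p.1 - d) ^ 2 + p.2 ^ 2 ≤ r₂ ^ 2} := by
    apply MeasurableSet.inter
    · exact measurableSet_le ((measurable_fst.pow_const 2).add (measurable_snd.pow_const 2))
        measurable_const
    · exact measurableSet_le (((measurable_fst.sub measurable_const).pow_const 2).add
        (measurable_snd.pow_const 2)) measurable_const
  have hslice : ∀ x : ℝ, volume {y : ℝ | x ^ 2 + y ^ 2 ≤ r₁ ^ 2 ∧ (x - d) ^ 2 + y ^ 2 ≤ r₂ ^ 2}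
      = ENNReal.ofReal (2 * Real.sqrt (g x)) := by
    intro x
    have hset : {y : ℝ | x ^ 2 + y ^ 2 ≤ r₁ ^ 2 ∧ (x - d) ^ 2 + y ^ 2 ≤ r₂ ^ 2}
        = {y : ℝ | y^2 ≤ g x} := by
      ext y; simp only [mem_setOf_eq, hgdef, le_min_iff]
      constructor <;> intro hy <;> exact ⟨by linarith [hy.1], by linarith [hy.2]⟩
    rw [hset]
    by_cases hgx : 0 ≤ g x
    · have : {y : ℝ | y^2 ≤ g x} = Icc (-Real.sqrt (g x)) (Real.sqrt (g x)) := by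
        ext y
        simp only [mem_setOf_eq, mem_Icc, ← abs_le]
        constructor
        · exact fun hy => Real.abs_le_sqrt hy
        · intro hy
          calc y^2 = |y|^2 := (sq_abs y).symm
            _ ≤ Real.sqrt (g x) ^ 2 := by
                exact pow_le_pow_left₀ (abs_nonneg y) hy 2
            _ = g x := Real.sq_sqrt hgx
      rw [this, Real.volume_Icc]
      congr 1; ring
    · push_neg at hgx
      have h0 : {y : ℝ | y^2 ≤ g x} = ∅ := by
        ext y; simp only [mem_setOf_eq, mem_empty_iff_false, iff_false]
        intro hy; nlinarith [sq_nonneg y]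
      rw [h0, Real.sqrt_eq_zero'.mpr hgx.le]
      simp
  have hvol : volume {p : ℝ × ℝ | p.1 ^ 2 + p.2 ^ 2 ≤ r₁ ^ 2 ∧ (p.1 - d) ^ 2 + p.2 ^ 2 ≤ r₂ ^ 2}
      = ∫⁻ x : ℝ, ENNReal.ofReal (2 * Real.sqrt (g x)) := by
    rw [MeasureTheory.Measure.volume_eq_prod, MeasureTheory.Measure.prod_apply hAmeas]
    congr 1; ext x
    rw [← hslice x]; rfl
  -- restrict to Icc
  have hsupp : Function.support (fun x => ENNReal.ofReal (2 * Real.sqrt (g x))) ⊆ Icc (d - r₂) r₁ := by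
    intro x hx
    by_contra hxI
    apply hx
    have hgx : g x ≤ 0 := by
      simp only [mem_Icc, not_and_or, not_le] at hxI
      rcases hxI with hxl | hxr
      · exact min_le_of_right_le (by nlinarith)
      · exact min_le_of_left_le (by nlinarith)
    simp [Real.sqrt_eq_zero'.mpr hgx]
  have hvol2 : volume {p : ℝ × ℝ | p.1 ^ 2 + p.2 ^ 2 ≤ r₁ ^ 2 ∧ (p.1 - d) ^ 2 + p.2 ^ 2 ≤ r₂ ^ 2}
      = ∫⁻ x in Icc (d - r₂) r₁, ENNReal.ofReal (2 * Real.sqrt (g x)) := by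
    rw [hvol, ← MeasureTheory.lintegral_indicator measurableSet_Icc,
      Set.indicator_eq_self.mpr hsupp]
  have hIcc : volume {p : ℝ × ℝ | p.1 ^ 2 + p.2 ^ 2 ≤ r₁ ^ 2 ∧ (p.1 - d) ^ 2 + p.2 ^ 2 ≤ r₂ ^ 2}
      = ENNReal.ofReal (∫ x in Icc (d - r₂) r₁, 2 * Real.sqrt (g x)) := by
    rw [hvol2, ← MeasureTheory.ofReal_integral_eq_lintegral_ofReal]
    · exact (hfcont.integrableOn_Icc)
    · exact Filter.Eventually.of_forall fun x => by positivity
  rw [hIcc]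
  congr 1
  -- convert to interval integral and split
  have hle1 : d - r₂ ≤ x₀ := by linarith
  have hle2 : x₀ ≤ r₁ := hx₀lt.le
  have hIccIoc : ∫ x in Icc (d - r₂) r₁, 2 * Real.sqrt (g x)
      = ∫ x in (d - r₂)..r₁, 2 * Real.sqrt (g x) := by
    rw [intervalIntegral.integral_of_le (by linarith), MeasureTheory.integral_Icc_eq_integral_Ioc]
  rw [hIccIoc]
  have hsplit : ∫ x in (d - r₂)..r₁, 2 * Real.sqrt (g x)
      = (∫ x in (d - r₂)..x₀, 2 * Real.sqrt (g x)) + ∫ x in x₀..r₁, 2 * Real.sqrt (g x) :=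
    (intervalIntegral.integral_add_adjacent_intervals
      (hfcont.intervalIntegrable _ _) (hfcont.intervalIntegrable _ _)).symm
  rw [hsplit]
  have hp1 : ∫ x in (d - r₂)..x₀, 2 * Real.sqrt (g x)
      = ∫ x in (d - r₂)..x₀, 2 * Real.sqrt (r₂^2 - (d - x)^2) := by
    apply intervalIntegral.integral_congr
    intro x hx
    rw [Set.uIcc_of_le hle1] at hx
    have hxle : x ≤ x₀ := hx.2
    have : g x = r₂^2 - (x - d)^2 := by
      apply min_eq_right
      have : 2*d*x₀ = d^2 + r₁^2 - r₂^2 := by rw [hx₀def]; field_simp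
      nlinarith
    show 2 * Real.sqrt (g x) = 2 * Real.sqrt (r₂^2 - (d - x)^2)
    rw [this, show (x - d)^2 = (d - x)^2 from by ring]
  have hp2 : ∫ x in x₀..r₁, 2 * Real.sqrt (g x)
      = ∫ x in x₀..r₁, 2 * Real.sqrt (r₁^2 - x^2) := by
    apply intervalIntegral.integral_congr
    intro x hx
    rw [Set.uIcc_of_le hle2] at hx
    have hxge : x₀ ≤ x := hx.1
    have : g x = r₁^2 - x^2 := by
      apply min_eq_left
      have : 2*d*x₀ = d^2 + r₁^2 - r₂^2 := by rw [hx₀def]; field_simp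
      nlinarith
    show 2 * Real.sqrt (g x) = 2 * Real.sqrt (r₁^2 - x^2)
    rw [this]
  rw [hp1, hp2]
  have hcomp : ∫ x in (d - r₂)..x₀, 2 * Real.sqrt (r₂^2 - (d - x)^2)
      = ∫ x in x₁..r₂, 2 * Real.sqrt (r₂^2 - x^2) := by
    have := intervalIntegral.integral_comp_sub_left
      (a := d - r₂) (b := x₀) (fun u => 2 * Real.sqrt (r₂^2 - u^2)) d
    beta_reduce at this
    rw [this]
    have e1 : d - x₀ = x₁ := by rw [hx₀def, hx₁def]; field_simp; ring
    have e2 : d - (d - r₂) = r₂ := by ring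
    rw [e1, e2]
  rw [hcomp, seg_integral' r₂ x₁ hr₂ (by linarith) hx₁lt.le,
    seg_integral' r₁ x₀ hr₁ (by linarith) hx₀lt.le]
  -- final arithmetic
  have hh2' : Real.sqrt (r₂^2 - x₁^2) = h := by rw [heq12]
  rw [hh2']
  have harctan1 : π/2 - Real.arcsin (x₀/r₁) = Real.arctan (t / (d ^ 2 + r₁ ^ 2 - r₂ ^ 2)) := by
    have h1' : Real.arccos (x₀/r₁) = Real.arctan (Real.sqrt (1 - (x₀/r₁)^2) / (x₀/r₁)) :=
      Real.arccos_eq_arctan (div_pos hx₀pos hr₁)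
    have hsq : Real.sqrt (1 - (x₀/r₁)^2) = h / r₁ := by
      have : 1 - (x₀/r₁)^2 = (r₁^2 - x₀^2) / r₁^2 := by field_simp
      rw [this, Real.sqrt_div (by nlinarith), Real.sqrt_sq hr₁.le, hhdef]
    have harg : Real.sqrt (1 - (x₀/r₁)^2) / (x₀/r₁) = t / (d ^ 2 + r₁ ^ 2 - r₂ ^ 2) := by
      rw [hsq, ht2dh]
      have hden : d ^ 2 + r₁ ^ 2 - r₂ ^ 2 = 2*d*x₀ := by rw [hx₀def]; field_simp
      rw [hden]
      field_simp
    rw [← Real.arccos, h1', harg]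
  have harctan2 : π/2 - Real.arcsin (x₁/r₂) = Real.arctan (t / (d ^ 2 - r₁ ^ 2 + r₂ ^ 2)) := by
    have h1' : Real.arccos (x₁/r₂) = Real.arctan (Real.sqrt (1 - (x₁/r₂)^2) / (x₁/r₂)) :=
      Real.arccos_eq_arctan (div_pos hx₁pos hr₂)
    have hsq : Real.sqrt (1 - (x₁/r₂)^2) = h / r₂ := by
      have : 1 - (x₁/r₂)^2 = (r₂^2 - x₁^2) / r₂^2 := by field_simp
      rw [this, heq12, Real.sqrt_div (by nlinarith), Real.sqrt_sq hr₂.le, hhdef]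
    have harg : Real.sqrt (1 - (x₁/r₂)^2) / (x₁/r₂) = t / (d ^ 2 - r₁ ^ 2 + r₂ ^ 2) := by
      rw [hsq, ht2dh]
      have hden : d ^ 2 - r₁ ^ 2 + r₂ ^ 2 = 2*d*x₁ := by rw [hx₁def]; field_simp
      rw [hden]
      field_simp
    rw [← Real.arccos, h1', harg]
  have ht2 : t / 2 = (x₀ + x₁) * h := by rw [ht2dh, hsum]; ring
  rw [← harctan1, ← harctan2]
  nlinarith [ht2]

/-- **Circle-intersection (lens) area formula** (used in Lemma 1). For two closed disks in
`ℝ²` of radii `r₁, r₂ > 0` and center distance `d = ‖c₁ − c₂‖` with `|r₁ − r₂| < d < r₁ + r₂`,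
`d² + r₁² > r₂²` and `d² + r₂² > r₁²`, the area of their intersection equals
`r₁² arctan(t/(d² + r₁² − r₂²)) + r₂² arctan(t/(d² − r₁² + r₂²)) − t/2` where
`t = √((d+r₁+r₂)(d+r₁−r₂)(d−r₁+r₂)(−d+r₁+r₂))`. -/
theorem lens_area_of_two_disks
    (r₁ r₂ : ℝ) (hr₁ : 0 < r₁) (hr₂ : 0 < r₂)
    (c₁ c₂ : EuclideanSpace ℝ (Fin 2))
    (hlow : |r₁ - r₂| < ‖c₁ - c₂‖) (hhigh : ‖c₁ - c₂‖ < r₁ + r₂)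
    (h₁ : ‖c₁ - c₂‖ ^ 2 + r₁ ^ 2 > r₂ ^ 2) (h₂ : ‖c₁ - c₂‖ ^ 2 + r₂ ^ 2 > r₁ ^ 2)
    (t : ℝ)
    (ht : t = Real.sqrt ((‖c₁ - c₂‖ + r₁ + r₂) * (‖c₁ - c₂‖ + r₁ - r₂) *
      (‖c₁ - c₂‖ - r₁ + r₂) * (-‖c₁ - c₂‖ + r₁ + r₂))) :
    volume (closedBall c₁ r₁ ∩ closedBall c₂ r₂) =
      ENNReal.ofReal
        (r₁ ^ 2 * Real.arctan (t / (‖c₁ - c₂‖ ^ 2 + r₁ ^ 2 - r₂ ^ 2)) +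
          r₂ ^ 2 * Real.arctan (t / (‖c₁ - c₂‖ ^ 2 - r₁ ^ 2 + r₂ ^ 2)) - t / 2) := by
  set d : ℝ := ‖c₁ - c₂‖ with hddef
  have hd : 0 < d := lt_of_le_of_lt (abs_nonneg _) hlow
  set w : EuclideanSpace ℝ (Fin 2) := d • EuclideanSpace.single 0 (1:ℝ) with hwdef
  have hw0 : w 0 = d := by simp [hwdef, EuclideanSpace.single_apply]
  have hw1 : w 1 = 0 := by simp [hwdef, EuclideanSpace.single_apply]
  have hnw : ‖w‖ = d := by
    rw [hwdef, norm_smul, EuclideanSpace.norm_single]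
    simp [abs_of_pos hd]
  set v : EuclideanSpace ℝ (Fin 2) := c₂ - c₁ with hvdef
  have hnv : ‖v‖ = d := by rw [hvdef, ← norm_neg]; simp [hddef, neg_sub]
  set e := Submodule.reflection (ℝ ∙ (w - v))ᗮ with hedef
  have hew : e w = v := Submodule.reflection_sub (by rw [hnw, hnv])
  have hmpe : MeasureTheory.MeasurePreserving (⇑e) volume volume :=
    LinearIsometryEquiv.measurePreserving e
  have hmpΦ : MeasureTheory.MeasurePreserving (fun x => e x + c₁) volume volume :=
    (measurePreserving_add_right volume c₁).comp hmpe
  have hmeas : MeasurableSet (closedBall c₁ r₁ ∩ closedBall c₂ r₂) :=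
    (measurableSet_closedBall).inter measurableSet_closedBall
  have hpre : (fun x => e x + c₁) ⁻¹' (closedBall c₁ r₁ ∩ closedBall c₂ r₂)
      = closedBall 0 r₁ ∩ closedBall w r₂ := by
    ext x
    simp only [Set.mem_preimage, Set.mem_inter_iff, mem_closedBall, dist_eq_norm]
    constructor
    · rintro ⟨ha, hb⟩
      constructor
      · rw [sub_zero, ← e.norm_map x]
        simpa using ha
      · rw [← e.norm_map (x - w), map_sub, hew]
        have : e x - v = e x + c₁ - c₂ := by rw [hvdef]; abel
        rw [this]; exact hb
    · rintro ⟨ha, hb⟩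
      rw [sub_zero] at ha
      constructor
      · rw [add_sub_cancel_right, e.norm_map]; exact ha
      · have : e x + c₁ - c₂ = e x - v := by rw [hvdef]; abel
        rw [this, ← hew, ← map_sub, e.norm_map]; exact hb
  have step1 : volume (closedBall c₁ r₁ ∩ closedBall c₂ r₂)
      = volume (closedBall (0 : EuclideanSpace ℝ (Fin 2)) r₁ ∩ closedBall w r₂) := by
    rw [← hmpΦ.measure_preimage hmeas.nullMeasurableSet, hpre]
  set ψ : EuclideanSpace ℝ (Fin 2) ≃ᵐ ℝ × ℝ :=
    (MeasurableEquiv.toLp 2 (Fin 2 → ℝ)).symm.trans (MeasurableEquiv.finTwoArrow) with hψdef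
  have hmpψ : MeasureTheory.MeasurePreserving (⇑ψ) volume volume :=
    (MeasureTheory.volume_preserving_finTwoArrow ℝ).comp
      (EuclideanSpace.volume_preserving_symm_measurableEquiv_toLp (Fin 2))
  have hψx : ∀ x : EuclideanSpace ℝ (Fin 2), ψ x = (x 0, x 1) := fun x => rfl
  set A : Set (ℝ × ℝ) :=
    {p : ℝ × ℝ | p.1 ^ 2 + p.2 ^ 2 ≤ r₁ ^ 2 ∧ (p.1 - d) ^ 2 + p.2 ^ 2 ≤ r₂ ^ 2} with hAdef
  have hAmeas : MeasurableSet A := by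
    apply MeasurableSet.inter
    · exact measurableSet_le ((measurable_fst.pow_const 2).add (measurable_snd.pow_const 2))
        measurable_const
    · exact measurableSet_le (((measurable_fst.sub measurable_const).pow_const 2).add
        (measurable_snd.pow_const 2)) measurable_const
  have hnorm_iff : ∀ (x : EuclideanSpace ℝ (Fin 2)) (r : ℝ), 0 ≤ r →
      (‖x‖ ≤ r ↔ (x 0) ^ 2 + (x 1) ^ 2 ≤ r ^ 2) := by
    intro x r hr
    rw [EuclideanSpace.norm_eq, Fin.sum_univ_two, Real.norm_eq_abs, Real.norm_eq_abs,
      sq_abs, sq_abs, show r = Real.sqrt (r ^ 2) by rw [Real.sqrt_sq hr],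
      Real.sqrt_le_sqrt_iff (by positivity), Real.sq_sqrt (pow_nonneg hr 2)]
  have hpre2 : (⇑ψ) ⁻¹' A = closedBall 0 r₁ ∩ closedBall w r₂ := by
    ext x
    simp only [Set.mem_preimage, Set.mem_inter_iff, mem_closedBall, dist_eq_norm, sub_zero,
      hψx x, hAdef, Set.mem_setOf_eq]
    have hx0 : (x - w) 0 = x 0 - d := by
      rw [show (x - w) 0 = x 0 - w 0 from rfl, hw0]
    have hx1 : (x - w) 1 = x 1 := by
      rw [show (x - w) 1 = x 1 - w 1 from rfl, hw1, sub_zero]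
    rw [hnorm_iff x r₁ hr₁.le, hnorm_iff (x - w) r₂ hr₂.le, hx0, hx1]
  have step2 : volume (closedBall (0 : EuclideanSpace ℝ (Fin 2)) r₁ ∩ closedBall w r₂)
      = volume A := by
    rw [← hmpψ.measure_preimage hAmeas.nullMeasurableSet, hpre2]
  rw [step1, step2, hAdef]
  exact planar_lens r₁ r₂ d t hr₁ hr₂ hlow hhigh h₁ h₂ ht
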